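/- Let r ≥ 2, s = r+3 and j ∈ {−1, 0}. There is no curve class c = (d, m) with d ≥ 2, multiplicities in decreasing order m_1 ≥ m_2 ≥ ⋯ ≥ m_s ≥ 0, satisfying d ≥ m_1 + ⋯ + m_{r+1} (Cremona reduced) and (r+1)d − (r−1)Σ_{i=1}^{s} m_i = 2 + j(r−1). Consequently, every Cremona reduced numerical (j)-class with nonnegative decreasing multiplicities and positive degree has d = 1 and Σ_i m_i = 1 − j, i.e., it is the class of a line through 1 − j of the points. -/

import Mathlib

lemma aux_no_class (r : ℕ) (hr : 2 ≤ r) (j : ℤ) (hj : j = -1 ∨ j = 0)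
    (d : ℤ) (m : Fin (r + 3) → ℤ) (hd : 2 ≤ d)
    (hmono : ∀ a b : Fin (r + 3), a ≤ b → m b ≤ m a)
    (hpos : ∀ i, 0 ≤ m i)
    (hcrem : ∑ i ∈ Finset.univ.filter (fun i : Fin (r + 3) => (i : ℕ) < r + 1), m i ≤ d)
    (heq : ((r : ℤ) + 1) * d - ((r : ℤ) - 1) * ∑ i, m i = 2 + j * ((r : ℤ) - 1)) :
    False := by
  set R : ℤ := (r : ℤ) with hR
  have hR2 : (2 : ℤ) ≤ R := by rw [hR]; exact_mod_cast hr
  set ir : Fin (r + 3) := ⟨r, by omega⟩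
  set i1 : Fin (r + 3) := ⟨r + 1, by omega⟩
  set i2 : Fin (r + 3) := ⟨r + 2, by omega⟩
  set F := ∑ i ∈ Finset.univ.filter (fun i : Fin (r + 3) => (i : ℕ) < r + 1), m i with hF
  -- the filter set is Iio i1
  have hfilt : Finset.univ.filter (fun i : Fin (r + 3) => (i : ℕ) < r + 1)
      = Finset.Iio i1 := by
    ext i
    simp [Fin.lt_def, i1]
  have hcard : (Finset.univ.filter (fun i : Fin (r + 3) => (i : ℕ) < r + 1)).card
      = r + 1 := by
    rw [hfilt, Fin.card_Iio]
  -- split total sum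
  have hsplit : ∑ i, m i = F + m i1 + m i2 := by
    rw [← Finset.sum_filter_add_sum_filter_not Finset.univ
      (fun i : Fin (r + 3) => (i : ℕ) < r + 1) m]
    have h2 : Finset.univ.filter (fun i : Fin (r + 3) => ¬ (i : ℕ) < r + 1)
        = {i1, i2} := by
      ext i
      simp only [Finset.mem_filter, Finset.mem_univ, true_and, Finset.mem_insert,
        Finset.mem_singleton, Fin.ext_iff, i1, i2, Fin.val_mk]
      have := i.isLt
      constructor
      · intro h; omega
      · rintro (h | h) <;> omega
    have hne : i1 ≠ i2 := by simp [Fin.ext_iff, i1, i2]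
    rw [h2, Finset.sum_insert (by simpa using hne), Finset.sum_singleton]
    ring
  -- (R+1) * m ir ≤ F
  have hB : (R + 1) * m ir ≤ F := by
    have h := Finset.card_nsmul_le_sum
      (Finset.univ.filter (fun i : Fin (r + 3) => (i : ℕ) < r + 1)) m (m ir)
      (fun i hi => by
        apply hmono i ir
        rw [Finset.mem_filter] at hi
        exact Fin.le_def.mpr (by have := hi.2; simp [ir]; omega))
    rw [hcard] at h
    have : ((r + 1 : ℕ) : ℤ) * m ir ≤ F := by
      rw [nsmul_eq_mul] at h; exact h
    push_cast at this
    linarith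
  have ha : m i1 ≤ m ir := hmono ir i1 (Fin.le_def.mpr (by simp [ir, i1]))
  have hb : m i2 ≤ m ir := hmono ir i2 (Fin.le_def.mpr (by simp [ir, i2]))
  have hta : 0 ≤ m ir := hpos ir
  set S := ∑ i, m i with hS
  set t := m ir with ht
  have hsq : (0 : ℤ) ≤ (R - 1) * (R + 1) := by nlinarith
  have e1 : 2 * (R - 1) * ((R + 1) * t) ≤ 2 * (R - 1) * F :=
    mul_le_mul_of_nonneg_left hB (by linarith)
  have e2 : (R - 1) * (R + 1) * F ≤ (R - 1) * (R + 1) * d :=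
    mul_le_mul_of_nonneg_left hcrem hsq
  have e3 : (R - 1) * (R + 1) * (m i1 + m i2) ≤ (R - 1) * (R + 1) * (2 * t) :=
    mul_le_mul_of_nonneg_left (by linarith) hsq
  have e4 : 2 * (R - 1) * F ≤ 2 * (R - 1) * d :=
    mul_le_mul_of_nonneg_left hcrem (by linarith)
  -- key inequality: 4d ≤ (R+1)(2 + j(R-1))
  have hkey : 4 * d ≤ (R + 1) * ((R + 1) * d - (R - 1) * S) := by
    nlinarith [e1, e2, e3, e4, hsplit]
  rw [heq] at hkey
  have hj0 : j ≤ 0 := by rcases hj with h | h <;> omega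
  have hj1 : -1 ≤ j := by rcases hj with h | h <;> omega
  have hjle : j * (R - 1) ≤ 0 := by
    nlinarith [mul_nonneg (by linarith : (0:ℤ) ≤ -j) (by linarith : (0:ℤ) ≤ R - 1)]
  have h2d : 2 * d ≤ R + 1 := by
    have : (R + 1) * (2 + j * (R - 1)) ≤ (R + 1) * 2 :=
      mul_le_mul_of_nonneg_left (by linarith) (by linarith)
    linarith
  -- t = 0
  have ht0 : t = 0 := by
    rcases le_or_gt t 0 with h | h
    · omega
    · exfalso
      have h1 : 1 ≤ t := h
      have : (R + 1) * 1 ≤ (R + 1) * t := mul_le_mul_of_nonneg_left h1 (by linarith)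
      linarith
  have ha0 : m i1 = 0 := le_antisymm (by rw [← ht0]; exact ha) (hpos i1)
  have hb0 : m i2 = 0 := le_antisymm (by rw [← ht0]; exact hb) (hpos i2)
  have hSd : S ≤ d := by rw [hsplit, ha0, hb0]; simpa using hcrem
  have : (R - 1) * S ≤ (R - 1) * d := mul_le_mul_of_nonneg_left hSd (by linarith)
  linarith [heq, hjle]

theorem no_cremona_reduced_numerical_class_rplus3 (r : ℕ) (hr : 2 ≤ r)
    (j : ℤ) (hj : j = -1 ∨ j = 0) :
    (¬ ∃ (d : ℤ) (m : Fin (r + 3) → ℤ),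
        2 ≤ d ∧ (∀ a b : Fin (r + 3), a ≤ b → m b ≤ m a) ∧ (∀ i, 0 ≤ m i) ∧
        (∑ i ∈ Finset.univ.filter (fun i : Fin (r + 3) => (i : ℕ) < r + 1), m i ≤ d) ∧
        ((r : ℤ) + 1) * d - ((r : ℤ) - 1) * ∑ i, m i = 2 + j * ((r : ℤ) - 1)) ∧
    (∀ (d : ℤ) (m : Fin (r + 3) → ℤ),
        1 ≤ d → (∀ a b : Fin (r + 3), a ≤ b → m b ≤ m a) → (∀ i, 0 ≤ m i) →
        (2 ≤ d →
          ∑ i ∈ Finset.univ.filter (fun i : Fin (r + 3) => (i : ℕ) < r + 1), m i ≤ d) →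
        ((r : ℤ) + 1) * d - ((r : ℤ) - 1) * ∑ i, m i = 2 + j * ((r : ℤ) - 1) →
        d = 1 ∧ ∑ i, m i = 1 - j) := by
  constructor
  · rintro ⟨d, m, hd, hmono, hpos, hcrem, heq⟩
    exact aux_no_class r hr j hj d m hd hmono hpos hcrem heq
  · intro d m hd hmono hpos hcrem heq
    have hd1 : d = 1 := by
      by_contra h
      have hd2 : 2 ≤ d := by omega
      exact aux_no_class r hr j hj d m hd2 hmono hpos (hcrem hd2) heq
    subst hd1
    refine ⟨rfl, ?_⟩
    have hR2 : (2 : ℤ) ≤ (r : ℤ) := by exact_mod_cast hr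
    have : ((r : ℤ) - 1) * (∑ i, m i) = ((r : ℤ) - 1) * (1 - j) := by linarith [heq]
    have hne : ((r : ℤ) - 1) ≠ 0 := by omega
    exact mul_left_cancel₀ hne this
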